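/- Let (K,v) be a valued field, I an ideal of K[x₁^{±1},…,x_n^{±1}], and γ ∈ Γⁿ. If γ is a tropical root of trop(f) for every f ∈ I (i.e. the minimum defining trop(f)(γ) is achieved at least twice, for every nonzero f ∈ I), then the initial ideal ini_γ(I) ⊆ k[x₁^{±1},…,x_n^{±1}] is a proper ideal; equivalently, no initial form ini_γ(f) for f ∈ I is a unit (a nonzero monomial). -/

import Mathlib

attribute [local instance] Classical.propDecidable

/-- The multiplicative weight `v(c_u)·⟨u,γ⟩` of the monomial of exponent `u` of the
Laurent polynomial `f` at the point `γ ∈ Γⁿ` (written multiplicatively, so that the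
additive minimum becomes a multiplicative maximum). -/
noncomputable def tropWeight {K Γ₀ : Type*} [Field K]
    [LinearOrderedCommGroupWithZero Γ₀] {n : ℕ} (v : Valuation K Γ₀)
    (γ : Fin n → Γ₀ˣ) (f : AddMonoidAlgebra K (Fin n →₀ ℤ)) (u : Fin n →₀ ℤ) : Γ₀ :=
  v (f.coeff u) * ((∏ j : Fin n, γ j ^ (u j) : Γ₀ˣ) : Γ₀)

/-- `γ` is a tropical root of `trop(f)`: the extremum of `v(c_u) + ⟨u,γ⟩` over the
support of `f` is attained at least twice. -/
def IsTropicalRoot {K Γ₀ : Type*} [Field K]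
    [LinearOrderedCommGroupWithZero Γ₀] {n : ℕ} (v : Valuation K Γ₀)
    (γ : Fin n → Γ₀ˣ) (f : AddMonoidAlgebra K (Fin n →₀ ℤ)) : Prop :=
  ∃ u₁ ∈ f.coeff.support, ∃ u₂ ∈ f.coeff.support, u₁ ≠ u₂ ∧
    (∀ u' ∈ f.coeff.support, tropWeight v γ f u' ≤ tropWeight v γ f u₁) ∧
    tropWeight v γ f u₂ = tropWeight v γ f u₁

/-- The initial form `ini_γ(f)` of a Laurent polynomial at `γ ∈ Γⁿ`. -/
noncomputable def iniAt {K k Γ₀ : Type*} [Field K] [Field k]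
    [LinearOrderedCommGroupWithZero Γ₀] {n : ℕ}
    (v : Valuation K Γ₀) (s : Γ₀ →* K) (res : K → k) (γ : Fin n → Γ₀ˣ)
    (f : AddMonoidAlgebra K (Fin n →₀ ℤ)) : AddMonoidAlgebra k (Fin n →₀ ℤ) :=
  ∑ u ∈ f.coeff.support,
    if ∀ u' ∈ f.coeff.support, tropWeight v γ f u' ≤ tropWeight v γ f u then
      AddMonoidAlgebra.single u (res (f.coeff u * (s (v (f.coeff u)))⁻¹))
    else 0

namespace Stmt17Aux

open AddMonoidAlgebra

variable {K k Γ₀ : Type*} [Field K] [Field k] [LinearOrderedCommGroupWithZero Γ₀] {n : ℕ}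

/-- the multiplicative value of the monomial `x^u` at `γ`. -/
noncomputable def gamFn (γ : Fin n → Γ₀ˣ) (u : Fin n →₀ ℤ) : Γ₀ˣ :=
  ∏ j : Fin n, γ j ^ (u j)

lemma gamFn_add (γ : Fin n → Γ₀ˣ) (a b : Fin n →₀ ℤ) :
    gamFn γ (a + b) = gamFn γ a * gamFn γ b := by
  simp [gamFn, Finsupp.add_apply, zpow_add, Finset.prod_mul_distrib]

lemma gamFn_zero (γ : Fin n → Γ₀ˣ) : gamFn γ (0 : Fin n →₀ ℤ) = 1 := by
  simp [gamFn]

lemma tropWeight_eq (v : Valuation K Γ₀) (γ : Fin n → Γ₀ˣ)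
    (f : AddMonoidAlgebra K (Fin n →₀ ℤ)) (u : Fin n →₀ ℤ) :
    tropWeight v γ f u = v (f.coeff u) * (gamFn γ u : Γ₀) := rfl

section sres

variable (v : Valuation K Γ₀) (s : Γ₀ →* K) (hs : ∀ g : Γ₀, v (s g) = g)
  (res : K → k) (hres0 : res 0 = 0)
  (hres_small : ∀ c : K, v c < 1 → res c = 0)
  (hres_add : ∀ x y : K, v x ≤ 1 → v y ≤ 1 → res (x + y) = res x + res y)
  (hres_mul : ∀ x y : K, v x ≤ 1 → v y ≤ 1 → res (x * y) = res x * res y)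
  (hres_one : res 1 = 1)

include hs in
lemma s_zero : s 0 = 0 := by
  have := hs 0; rwa [v.zero_iff] at this

include hs in
lemma s_ne_zero {a : Γ₀} (ha : a ≠ 0) : s a ≠ 0 := by
  intro h
  exact ha (by rw [← hs a, h, v.map_zero])

include hs in
lemma s_inv (a : Γ₀) : s a⁻¹ = (s a)⁻¹ := by
  rcases eq_or_ne a 0 with h | h
  · simp [h, s_zero v s hs]
  · refine eq_inv_of_mul_eq_one_left ?_
    rw [← s.map_mul, inv_mul_cancel₀ h, s.map_one]

include hs hres_mul hres_one in
lemma res_ne_zero {x : K} (hx : v x = 1) : res x ≠ 0 := by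
  have hx0 : x ≠ 0 := by
    intro h; rw [h, v.map_zero] at hx; simp at hx
  have hinv : v x⁻¹ = 1 := by rw [map_inv₀, hx, inv_one]
  have := hres_mul x x⁻¹ hx.le hinv.le
  rw [mul_inv_cancel₀ hx0, hres_one] at this
  intro h
  rw [h, zero_mul] at this
  exact one_ne_zero this

/-- The renormalized residue map on Laurent polynomials all of whose weights are `≤ 1`. -/
noncomputable def Phi (γ : Fin n → Γ₀ˣ) (f : AddMonoidAlgebra K (Fin n →₀ ℤ)) :
    AddMonoidAlgebra k (Fin n →₀ ℤ) :=
  AddMonoidAlgebra.ofCoeff (Finsupp.onFinset f.coeff.support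
    (fun y => if hy : f.coeff y = 0 then 0 else res (f.coeff y * s (gamFn γ y)))
    (fun y h => by
      rw [Finsupp.mem_support_iff]
      intro h0
      simp [h0] at h))

include hres0 in
lemma Phi_apply (γ : Fin n → Γ₀ˣ) (f : AddMonoidAlgebra K (Fin n →₀ ℤ)) (y : Fin n →₀ ℤ) :
    (Phi s res γ f).coeff y = res (f.coeff y * s (gamFn γ y)) := by
  show (if hy : f.coeff y = 0 then 0 else res (f.coeff y * s (gamFn γ y))) = _
  split
  · next h => rw [h, zero_mul, hres0]
  · rfl

include hres0 in
lemma Phi_zero (γ : Fin n → Γ₀ˣ) : Phi s res γ (0 : AddMonoidAlgebra K (Fin n →₀ ℤ)) = 0 := by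
  ext y
  rw [Phi_apply s res hres0]
  show res ((0:K) * _) = _
  rw [zero_mul, hres0]; rfl

/-- all weights of `f` at `γ` are at most 1 -/
def Bdd (v : Valuation K Γ₀) (γ : Fin n → Γ₀ˣ) (f : AddMonoidAlgebra K (Fin n →₀ ℤ)) : Prop :=
  ∀ y, v (f.coeff y) * (gamFn γ y : Γ₀) ≤ 1

lemma Bdd_zero (γ : Fin n → Γ₀ˣ) : Bdd v γ (0 : AddMonoidAlgebra K (Fin n →₀ ℤ)) := by
  intro y
  show v 0 * _ ≤ 1
  rw [v.map_zero, zero_mul]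
  exact zero_le'

lemma Bdd_add {γ : Fin n → Γ₀ˣ} {f g : AddMonoidAlgebra K (Fin n →₀ ℤ)}
    (hf : Bdd v γ f) (hg : Bdd v γ g) : Bdd v γ (f + g) := by
  intro y
  have h1 : v ((f + g).coeff y) ≤ v (f.coeff y) ⊔ v (g.coeff y) := v.map_add _ _
  calc v ((f + g).coeff y) * (gamFn γ y : Γ₀) ≤ (v (f.coeff y) ⊔ v (g.coeff y)) * (gamFn γ y : Γ₀) :=
        mul_le_mul_left h1 _
    _ = (v (f.coeff y) * (gamFn γ y : Γ₀)) ⊔ (v (g.coeff y) * (gamFn γ y : Γ₀)) :=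
        (max_mul_mul_right _ _ _).symm
    _ ≤ 1 := sup_le (hf y) (hg y)

include hs hres0 hres_add in
lemma Phi_add (γ : Fin n → Γ₀ˣ) {f g : AddMonoidAlgebra K (Fin n →₀ ℤ)}
    (hf : Bdd v γ f) (hg : Bdd v γ g) :
    Phi s res γ (f + g) = Phi s res γ f + Phi s res γ g := by
  ext y
  rw [AddMonoidAlgebra.coeff_add, Finsupp.add_apply, Phi_apply s res hres0, Phi_apply s res hres0, Phi_apply s res hres0]
  have hb : ∀ h : AddMonoidAlgebra K (Fin n →₀ ℤ), Bdd v γ h → v (h.coeff y * s (gamFn γ y)) ≤ 1 := by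
    intro h hh
    rw [v.map_mul, hs]
    exact hh y
  rw [show (f + g).coeff y = f.coeff y + g.coeff y from rfl, add_mul]
  exact hres_add _ _ (hb f hf) (hb g hg)

include hs hres0 hres_add in
lemma Phi_sum (γ : Fin n → Γ₀ˣ) {α : Type*} (t : Finset α)
    (F : α → AddMonoidAlgebra K (Fin n →₀ ℤ)) (hF : ∀ x ∈ t, Bdd v γ (F x)) :
    Bdd v γ (∑ x ∈ t, F x) ∧ Phi s res γ (∑ x ∈ t, F x) = ∑ x ∈ t, Phi s res γ (F x) := by
  classical
  induction t using Finset.cons_induction with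
  | empty => simpa using ⟨Bdd_zero v γ, Phi_zero s res hres0 γ⟩
  | cons a t ha ih =>
    have hFa := hF a (Finset.mem_cons_self a t)
    obtain ⟨hb, hp⟩ := ih (fun x hx => hF x (Finset.mem_cons_of_mem hx))
    rw [Finset.sum_cons, Finset.sum_cons]
    exact ⟨Bdd_add v hFa hb,
      by rw [Phi_add v s hs res hres0 hres_add γ hFa hb, hp]⟩

end sres

section sres2

variable (v : Valuation K Γ₀) (s : Γ₀ →* K) (hs : ∀ g : Γ₀, v (s g) = g)
  (res : K → k) (hres0 : res 0 = 0)
  (hres_small : ∀ c : K, v c < 1 → res c = 0)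
  (hres_mul : ∀ x y : K, v x ≤ 1 → v y ≤ 1 → res (x * y) = res x * res y)
  (γ : Fin n → Γ₀ˣ)

lemma iniAt_apply (f : AddMonoidAlgebra K (Fin n →₀ ℤ)) (y : Fin n →₀ ℤ) :
    (iniAt v s res γ f).coeff y =
      if y ∈ f.coeff.support ∧ (∀ u' ∈ f.coeff.support, tropWeight v γ f u' ≤ tropWeight v γ f y)
      then res (f.coeff y * (s (v (f.coeff y)))⁻¹) else 0 := by
  classical
  rw [iniAt, AddMonoidAlgebra.coeff_sum, Finsupp.finset_sum_apply]
  by_cases hy : y ∈ f.coeff.support ∧ (∀ u' ∈ f.coeff.support, tropWeight v γ f u' ≤ tropWeight v γ f y)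
  · rw [if_pos hy]
    refine (Finset.sum_eq_single_of_mem y hy.1 ?_).trans ?_
    · intro u _ hne
      split
      · exact Finsupp.single_eq_of_ne (Ne.symm hne)
      · rfl
    · split
      · exact Finsupp.single_eq_same
      · next h => exact absurd hy.2 h
  · rw [if_neg hy]
    refine Finset.sum_eq_zero ?_
    intro u hu
    split
    · next hP =>
      rcases eq_or_ne u y with rfl | hne
      · exact absurd ⟨hu, hP⟩ hy
      · exact Finsupp.single_eq_of_ne (Ne.symm hne)
    · rfl

/-- the maximal weight of `f` at `γ` -/
noncomputable def Wt (v : Valuation K Γ₀) (γ : Fin n → Γ₀ˣ)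
    (f : AddMonoidAlgebra K (Fin n →₀ ℤ)) : Γ₀ :=
  if h : f.coeff.support.Nonempty then f.coeff.support.sup' h (tropWeight v γ f) else 1

lemma tropWeight_le_Wt {f : AddMonoidAlgebra K (Fin n →₀ ℤ)} (hf : f ≠ 0) (u : Fin n →₀ ℤ) :
    tropWeight v γ f u ≤ Wt v γ f := by
  have hne : f.coeff.support.Nonempty :=
    Finsupp.support_nonempty_iff.mpr (mt AddMonoidAlgebra.coeff_eq_zero.mp hf)
  rw [Wt, dif_pos hne]
  by_cases hu : u ∈ f.coeff.support
  · exact Finset.le_sup' _ hu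
  · have : f.coeff u = 0 := by rwa [Finsupp.mem_support_iff, not_not] at hu
    rw [tropWeight_eq, this, v.map_zero, zero_mul]
    exact zero_le'

lemma Wt_ne_zero {f : AddMonoidAlgebra K (Fin n →₀ ℤ)} (hf : f ≠ 0) : Wt v γ f ≠ 0 := by
  have hne : f.coeff.support.Nonempty :=
    Finsupp.support_nonempty_iff.mpr (mt AddMonoidAlgebra.coeff_eq_zero.mp hf)
  rw [Wt, dif_pos hne]
  obtain ⟨u, hu, hequ⟩ := Finset.exists_mem_eq_sup' hne (tropWeight v γ f)
  rw [hequ, tropWeight_eq]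
  refine mul_ne_zero ?_ (Units.ne_zero _)
  rw [Ne, v.zero_iff]
  rwa [Finsupp.mem_support_iff] at hu

lemma Wt_eq_of_max {f : AddMonoidAlgebra K (Fin n →₀ ℤ)} (hf : f ≠ 0) {y : Fin n →₀ ℤ}
    (hy : y ∈ f.coeff.support)
    (hmax : ∀ u' ∈ f.coeff.support, tropWeight v γ f u' ≤ tropWeight v γ f y) :
    tropWeight v γ f y = Wt v γ f := by
  have hne : f.coeff.support.Nonempty :=
    Finsupp.support_nonempty_iff.mpr (mt AddMonoidAlgebra.coeff_eq_zero.mp hf)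
  refine le_antisymm (tropWeight_le_Wt v γ hf y) ?_
  rw [Wt, dif_pos hne]
  exact Finset.sup'_le hne _ hmax

include hs in
lemma bdd_norm {f : AddMonoidAlgebra K (Fin n →₀ ℤ)} (hf : f ≠ 0) :
    Bdd v γ (AddMonoidAlgebra.single 0 (s (Wt v γ f))⁻¹ * f) := by
  intro y
  rw [AddMonoidAlgebra.coeff_single_zero_mul, v.map_mul, map_inv₀, hs, mul_assoc,
    ← tropWeight_eq]
  calc (Wt v γ f)⁻¹ * tropWeight v γ f y ≤ (Wt v γ f)⁻¹ * Wt v γ f :=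
        mul_le_mul_right (tropWeight_le_Wt v γ hf y) _
    _ = 1 := inv_mul_cancel₀ (Wt_ne_zero v γ hf)

include hs hres0 hres_small in
lemma ini_eq_Phi {f : AddMonoidAlgebra K (Fin n →₀ ℤ)} (hf : f ≠ 0) :
    iniAt v s res γ f = Phi s res γ (AddMonoidAlgebra.single 0 (s (Wt v γ f))⁻¹ * f) := by
  ext y
  rw [Phi_apply s res hres0, iniAt_apply, AddMonoidAlgebra.coeff_single_zero_mul]
  have hW0 : Wt v γ f ≠ 0 := Wt_ne_zero v γ hf
  by_cases hy : y ∈ f.coeff.support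
  · have hfy : f.coeff y ≠ 0 := Finsupp.mem_support_iff.mp hy
    by_cases hP : ∀ u' ∈ f.coeff.support, tropWeight v γ f u' ≤ tropWeight v γ f y
    · rw [if_pos ⟨hy, hP⟩]
      have hWy : v (f.coeff y) * (gamFn γ y : Γ₀) = Wt v γ f := Wt_eq_of_max v γ hf hy hP
      have hvfy : v (f.coeff y) = Wt v γ f * ((gamFn γ y : Γ₀))⁻¹ := by
        rw [← hWy, mul_assoc, mul_inv_cancel₀ (Units.ne_zero (gamFn γ y)), mul_one]
      have hsinv : (s (v (f.coeff y)))⁻¹ = (s (Wt v γ f))⁻¹ * s (gamFn γ y : Γ₀) := by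
        rw [← s_inv v s hs, hvfy, mul_inv, inv_inv, s.map_mul, s_inv v s hs]
      rw [hsinv]
      congr 1
      ring
    · rw [if_neg (by tauto)]
      push_neg at hP
      obtain ⟨u', hu', hlt⟩ := hP
      refine (hres_small _ ?_).symm
      rw [v.map_mul, v.map_mul, map_inv₀, hs, hs, mul_assoc, ← tropWeight_eq]
      have h1 : tropWeight v γ f y < Wt v γ f :=
        lt_of_lt_of_le hlt (tropWeight_le_Wt v γ hf u')
      calc (Wt v γ f)⁻¹ * tropWeight v γ f y < (Wt v γ f)⁻¹ * Wt v γ f :=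
            mul_lt_mul_of_pos_left h1 (zero_lt_iff.mpr (inv_ne_zero hW0))
        _ = 1 := inv_mul_cancel₀ hW0
  · rw [if_neg (by tauto)]
    have hfy : f.coeff y = 0 := by rwa [Finsupp.mem_support_iff, not_not] at hy
    rw [hfy, mul_zero, zero_mul, hres0]

lemma sub_shift (w y : Fin n →₀ ℤ) : ∀ a : Fin n →₀ ℤ, w + a = y ↔ a = y - w := by
  intro a
  constructor
  · intro h; rw [← h, add_sub_cancel_left]
  · intro h; rw [h, add_comm, sub_add_cancel]

lemma single_mul_apply' (cc : K) (g : AddMonoidAlgebra K (Fin n →₀ ℤ)) (w y : Fin n →₀ ℤ) :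
    (AddMonoidAlgebra.single w cc * g).coeff y = cc * g.coeff (y - w) :=
  AddMonoidAlgebra.coeff_single_mul_eq_mul_coeff (y - w) (fun a _ => sub_shift w y a)

lemma single_mul_apply'' (cc : k) (g : AddMonoidAlgebra k (Fin n →₀ ℤ)) (w y : Fin n →₀ ℤ) :
    (AddMonoidAlgebra.single w cc * g).coeff y = cc * g.coeff (y - w) :=
  AddMonoidAlgebra.coeff_single_mul_eq_mul_coeff (y - w) (fun a _ => sub_shift w y a)

lemma gamFn_split (w y : Fin n →₀ ℤ) :
    (gamFn γ y : Γ₀) = (gamFn γ w : Γ₀) * (gamFn γ (y - w) : Γ₀) := by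
  have : w + (y - w) = y := by rw [add_comm, sub_add_cancel]
  rw [← this, gamFn_add, Units.val_mul, add_sub_cancel_left]

include hs in
lemma key_mul_bdd {w : Fin n →₀ ℤ} {cc : K} {g : AddMonoidAlgebra K (Fin n →₀ ℤ)}
    (hc : v cc * (gamFn γ w : Γ₀) ≤ 1) (hg : Bdd v γ g) :
    Bdd v γ (AddMonoidAlgebra.single w cc * g) := by
  intro y
  rw [single_mul_apply', v.map_mul, gamFn_split γ w y,
    mul_mul_mul_comm]
  calc _ ≤ 1 * 1 := mul_le_mul' hc (hg (y - w))
  _ = 1 := one_mul 1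

include hs hres0 hres_mul in
lemma key_mul {w : Fin n →₀ ℤ} {cc : K} {g : AddMonoidAlgebra K (Fin n →₀ ℤ)}
    (hc : v cc * (gamFn γ w : Γ₀) ≤ 1) (hg : Bdd v γ g) :
    Phi s res γ (AddMonoidAlgebra.single w cc * g)
      = res (cc * s (gamFn γ w : Γ₀)) •
        (AddMonoidAlgebra.single w (1 : k) * Phi s res γ g) := by
  ext y
  rw [Phi_apply s res hres0, single_mul_apply',
    show ((res (cc * s (gamFn γ w : Γ₀)) •
        (AddMonoidAlgebra.single w (1 : k) * Phi s res γ g)).coeff y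
      = res (cc * s (gamFn γ w : Γ₀)) *
        ((AddMonoidAlgebra.single w (1 : k) * Phi s res γ g).coeff y)) from rfl,
    single_mul_apply'', one_mul, Phi_apply s res hres0, gamFn_split γ w y, s.map_mul,
    show cc * g.coeff (y - w) * (s (gamFn γ w : Γ₀) * s (gamFn γ (y - w) : Γ₀))
      = (cc * s (gamFn γ w : Γ₀)) * (g.coeff (y - w) * s (gamFn γ (y - w) : Γ₀)) by ring]
  refine hres_mul _ _ ?_ ?_
  · rw [v.map_mul, hs]; exact hc
  · rw [v.map_mul, hs]; exact hg (y - w)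

include hs hres0 in
lemma ini_coeff_mem (f : AddMonoidAlgebra K (Fin n →₀ ℤ)) (y : Fin n →₀ ℤ) :
    ∃ b : K, v b ≤ 1 ∧ res b = (iniAt v s res γ f).coeff y := by
  rw [iniAt_apply]
  split
  · next h =>
    refine ⟨f.coeff y * (s (v (f.coeff y)))⁻¹, ?_, rfl⟩
    rw [v.map_mul, map_inv₀, hs]
    rcases eq_or_ne (v (f.coeff y)) 0 with h0 | h0
    · rw [h0, zero_mul]; exact zero_le'
    · rw [mul_inv_cancel₀ h0]
  · exact ⟨0, by rw [v.map_zero]; exact zero_le', hres0⟩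

end sres2

section sres3

variable (v : Valuation K Γ₀) (s : Γ₀ →* K) (hs : ∀ g : Γ₀, v (s g) = g)
  (res : K → k) (hres0 : res 0 = 0)
  (hres_small : ∀ c : K, v c < 1 → res c = 0)
  (hres_add : ∀ x y : K, v x ≤ 1 → v y ≤ 1 → res (x + y) = res x + res y)
  (hres_mul : ∀ x y : K, v x ≤ 1 → v y ≤ 1 → res (x * y) = res x * res y)
  (hres_one : res 1 = 1)
  (γ : Fin n → Γ₀ˣ) (I : Ideal (AddMonoidAlgebra K (Fin n →₀ ℤ)))

/-- elements of the residue Laurent ring which arise as `Phi` of a bounded element of `I`. -/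
def GoodSet : Set (AddMonoidAlgebra k (Fin n →₀ ℤ)) :=
  {z | ∃ g, g ∈ I ∧ Bdd v γ g ∧ Phi s res γ g = z}

include hres0 in
lemma good_zero : (0 : AddMonoidAlgebra k (Fin n →₀ ℤ)) ∈ GoodSet v s res γ I :=
  ⟨0, I.zero_mem, Bdd_zero v γ, Phi_zero s res hres0 γ⟩

include hs hres0 hres_add in
lemma good_sum {α : Type*} (t : Finset α) (F : α → AddMonoidAlgebra k (Fin n →₀ ℤ))
    (hF : ∀ x ∈ t, F x ∈ GoodSet v s res γ I) :
    (∑ x ∈ t, F x) ∈ GoodSet v s res γ I := by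
  classical
  induction t using Finset.cons_induction with
  | empty => simpa using good_zero v s res hres0 γ I
  | cons a t ha ih =>
    obtain ⟨g₁, hg₁I, hg₁B, hg₁P⟩ := hF a (Finset.mem_cons_self a t)
    obtain ⟨g₂, hg₂I, hg₂B, hg₂P⟩ := ih (fun x hx => hF x (Finset.mem_cons_of_mem hx))
    refine ⟨g₁ + g₂, I.add_mem hg₁I hg₂I, Bdd_add v hg₁B hg₂B, ?_⟩
    rw [Phi_add v s hs res hres0 hres_add γ hg₁B hg₂B, hg₁P, hg₂P, Finset.sum_cons]

include hs hres0 hres_small hres_mul in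
lemma good_term {f : AddMonoidAlgebra K (Fin n →₀ ℤ)} (hfI : f ∈ I) (u : Fin n →₀ ℤ)
    {b : K} (hb : v b ≤ 1) :
    (res b) • (AddMonoidAlgebra.single u (1 : k) * iniAt v s res γ f)
      ∈ GoodSet v s res γ I := by
  rcases eq_or_ne f 0 with rfl | hf
  · have : iniAt v s res γ (0 : AddMonoidAlgebra K (Fin n →₀ ℤ)) = 0 := by
      rw [iniAt]
      simp
    rw [this, mul_zero, smul_zero]
    exact good_zero v s res hres0 γ I
  rcases eq_or_ne (res b) 0 with hrb | hrb
  · rw [hrb, zero_smul]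
    exact good_zero v s res hres0 γ I
  have hvb : v b = 1 := by
    rcases lt_or_eq_of_le hb with h | h
    · exact absurd (hres_small b h) hrb
    · exact h
  have hγu : (gamFn γ u : Γ₀) ≠ 0 := Units.ne_zero _
  have hsγu : s (gamFn γ u : Γ₀) ≠ 0 := s_ne_zero v s hs hγu
  set cc : K := b * (s (gamFn γ u : Γ₀))⁻¹ with hcc
  set g' : AddMonoidAlgebra K (Fin n →₀ ℤ) :=
    AddMonoidAlgebra.single 0 (s (Wt v γ f))⁻¹ * f with hg'
  have hg'B : Bdd v γ g' := bdd_norm v s hs γ hf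
  have hcbound : v cc * (gamFn γ u : Γ₀) ≤ 1 := by
    rw [hcc, v.map_mul, map_inv₀, hs, mul_assoc,
      inv_mul_cancel₀ hγu, mul_one, hvb]
  refine ⟨AddMonoidAlgebra.single u cc * g',
    Ideal.mul_mem_left _ _ (Ideal.mul_mem_left _ _ hfI),
    key_mul_bdd v s hs γ hcbound hg'B, ?_⟩
  rw [key_mul v s hs res hres0 hres_mul γ hcbound hg'B,
    ← ini_eq_Phi v s hs res hres0 hres_small γ hf, hcc,
    inv_mul_cancel_right₀ hsγu]

include hs hres0 hres_small hres_mul hres_one in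
lemma good_one_false (hroot : ∀ f ∈ I, f ≠ 0 → IsTropicalRoot v γ f) :
    (1 : AddMonoidAlgebra k (Fin n →₀ ℤ)) ∉ GoodSet v s res γ I := by
  rintro ⟨G, hGI, hGB, hGP⟩
  have hres1 : ∀ y : Fin n →₀ ℤ, res (G.coeff y * s (gamFn γ y : Γ₀)) = (1 : AddMonoidAlgebra k (Fin n →₀ ℤ)).coeff y := by
    intro y
    rw [← Phi_apply s res hres0, hGP]
  have h0 : res (G.coeff 0) = 1 := by
    have := hres1 0
    rw [gamFn_zero, Units.val_one, s.map_one, mul_one] at this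
    rw [this, AddMonoidAlgebra.one_def, AddMonoidAlgebra.coeff_single, Finsupp.single_eq_same]
  have hG0 : G.coeff 0 ≠ 0 := by
    intro h
    rw [h, hres0] at h0
    exact zero_ne_one h0
  have hGne : G ≠ 0 := by
    intro h
    rw [h] at hG0
    exact hG0 rfl
  have hv0 : v (G.coeff 0) = 1 := by
    have hle : v (G.coeff 0) ≤ 1 := by
      have := hGB 0
      rwa [gamFn_zero, Units.val_one, mul_one] at this
    rcases lt_or_eq_of_le hle with h | h
    · exact absurd (hres_small _ h) (by rw [h0]; exact one_ne_zero)
    · exact h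
  have hw0 : tropWeight v γ G 0 = 1 := by
    rw [tropWeight_eq, gamFn_zero, Units.val_one, mul_one, hv0]
  have h0supp : (0 : Fin n →₀ ℤ) ∈ G.coeff.support := Finsupp.mem_support_iff.mpr hG0
  obtain ⟨u₁, hu₁, u₂, hu₂, hne, hmax, heq⟩ := hroot G hGI hGne
  have hw1 : tropWeight v γ G u₁ = 1 := by
    refine le_antisymm ?_ ?_
    · rw [tropWeight_eq]; exact hGB u₁
    · rw [← hw0]; exact hmax 0 h0supp
  have hzero : ∀ u : Fin n →₀ ℤ, tropWeight v γ G u = 1 → u = 0 := by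
    intro u hu
    by_contra hne0
    have : (Phi s res γ G).coeff u = 0 := by
      rw [hGP, AddMonoidAlgebra.one_def, AddMonoidAlgebra.coeff_single, Finsupp.single_apply, if_neg (fun h => hne0 h.symm)]
    rw [Phi_apply s res hres0] at this
    refine res_ne_zero v s hs res hres_mul hres_one ?_ this
    rw [v.map_mul, hs, ← tropWeight_eq, hu]
  have e1 : u₁ = 0 := hzero u₁ hw1
  have e2 : u₂ = 0 := hzero u₂ (heq.trans hw1)
  exact hne (e1.trans e2.symm)

end sres3

end Stmt17Aux

open Stmt17Aux

set_option synthInstance.maxHeartbeats 1000000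
set_option maxHeartbeats 1000000

/-- If `γ` is a tropical root of every nonzero `f ∈ I`, then the initial ideal
`ini_γ(I)` is a proper ideal of `k[x₁^{±1},…,x_n^{±1}]`. -/
theorem stmt17 {K k Γ₀ : Type*} [Field K] [Field k]
    [LinearOrderedCommGroupWithZero Γ₀] {n : ℕ}
    (v : Valuation K Γ₀) (s : Γ₀ →* K) (hs : ∀ γ : Γ₀, v (s γ) = γ)
    (res : K → k) (hres0 : res 0 = 0)
    (hres_small : ∀ c : K, v c < 1 → res c = 0)
    (hres_add : ∀ x y : K, v x ≤ 1 → v y ≤ 1 → res (x + y) = res x + res y)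
    (hres_mul : ∀ x y : K, v x ≤ 1 → v y ≤ 1 → res (x * y) = res x * res y)
    (hres_one : res 1 = 1)
    (I : Ideal (AddMonoidAlgebra K (Fin n →₀ ℤ))) (γ : Fin n → Γ₀ˣ)
    (hroot : ∀ f ∈ I, f ≠ 0 → IsTropicalRoot v γ f) :
    Ideal.span (iniAt v s res γ '' (I : Set (AddMonoidAlgebra K (Fin n →₀ ℤ)))) ≠ ⊤ := by
    classical
  intro htop
  have h1 : (1 : AddMonoidAlgebra k (Fin n →₀ ℤ)) ∈
      Ideal.span (iniAt v s res γ '' (I : Set (AddMonoidAlgebra K (Fin n →₀ ℤ)))) :=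
    (Ideal.eq_top_iff_one _).mp htop
  obtain ⟨c, hcsupp, hcsum⟩ := Submodule.mem_span_set.mp h1
  -- the image of the valuation ring under `res` is a subfield of `k`
  let k₀ : Subfield k :=
  { carrier := {a : k | ∃ b : K, v b ≤ 1 ∧ res b = a}
    zero_mem' := ⟨0, by rw [v.map_zero]; exact zero_le', hres0⟩
    one_mem' := ⟨1, by rw [v.map_one], hres_one⟩
    add_mem' := by
      rintro a a' ⟨b, hb, rfl⟩ ⟨b', hb', rfl⟩
      exact ⟨b + b', le_trans (v.map_add b b') (sup_le hb hb'), hres_add b b' hb hb'⟩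
    neg_mem' := by
      rintro a ⟨b, hb, rfl⟩
      refine ⟨-b, by rw [v.map_neg]; exact hb, ?_⟩
      have h := hres_add b (-b) hb (by rw [v.map_neg]; exact hb)
      rw [add_neg_cancel, hres0] at h
      exact (neg_eq_of_add_eq_zero_right h.symm).symm
    mul_mem' := by
      rintro a a' ⟨b, hb, rfl⟩ ⟨b', hb', rfl⟩
      refine ⟨b * b', ?_, hres_mul b b' hb hb'⟩
      rw [v.map_mul]
      exact mul_le_one' hb hb'
    inv_mem' := by
      rintro a ⟨b, hb, rfl⟩
      rcases eq_or_ne (res b) 0 with h0 | h0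
      · rw [h0, inv_zero]
        exact ⟨0, by rw [v.map_zero]; exact zero_le', hres0⟩
      · have hvb : v b = 1 :=
          (lt_or_eq_of_le hb).resolve_left (fun h => h0 (hres_small b h))
        have hb0 : b ≠ 0 := by
          intro h; rw [h, v.map_zero] at hvb; simp at hvb
        have hbinv : v b⁻¹ ≤ 1 := by rw [map_inv₀, hvb, inv_one]
        refine ⟨b⁻¹, hbinv, ?_⟩
        have hthis := hres_mul b b⁻¹ hb hbinv
        rw [mul_inv_cancel₀ hb0, hres_one] at hthis
        exact (inv_eq_of_mul_eq_one_right hthis.symm).symm }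
  -- a `k₀`-linear projection of `k` onto `k₀`
  let p : Submodule k₀ k :=
  { carrier := {a : k | ∃ b : K, v b ≤ 1 ∧ res b = a}
    add_mem' := fun ha hb => k₀.add_mem ha hb
    zero_mem' := k₀.zero_mem
    smul_mem' := fun x a ha => k₀.mul_mem x.2 ha }
  obtain ⟨q, hq⟩ := p.exists_isCompl
  set π₀ := p.linearProjOfIsCompl q hq with hπ₀
  set π' : k → k := fun a => ((π₀ a : p) : k) with hπ'
  have hπmem : ∀ a : k, ∃ b : K, v b ≤ 1 ∧ res b = π' a := fun a => (π₀ a).2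
  have hπ0 : π' 0 = 0 := by simp [hπ']
  have hπadd : ∀ a b : k, π' (a + b) = π' a + π' b := by
    intro a b; simp [hπ', map_add]
  have hπfix : ∀ a : k, (∃ b : K, v b ≤ 1 ∧ res b = a) → π' a = a := by
    intro a ha
    have h1 : π₀ a = ⟨a, ha⟩ := Submodule.linearProjOfIsCompl_apply_left hq ⟨a, ha⟩
    show ((π₀ a : p) : k) = a
    rw [h1]
  have hπsmul : ∀ (x a : k), (∃ b : K, v b ≤ 1 ∧ res b = x) → π' (x * a) = x * π' a := by
    intro x a hx
    have h1 : x * a = (⟨x, hx⟩ : k₀) • a := rfl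
    show ((π₀ (x * a) : p) : k) = _
    rw [h1, map_smul π₀, Submodule.coe_smul]
    rfl
  -- the coefficientwise projection on the residue Laurent ring
  let π'hom : k →+ k := { toFun := π', map_zero' := hπ0, map_add' := hπadd }
  let Ψ : AddMonoidAlgebra k (Fin n →₀ ℤ) →+ AddMonoidAlgebra k (Fin n →₀ ℤ) :=
    AddMonoidAlgebra.coeffAddEquiv.symm.toAddMonoidHom.comp
      ((Finsupp.mapRange.addMonoidHom π'hom).comp AddMonoidAlgebra.coeffAddEquiv.toAddMonoidHom)
  have hΨapply : ∀ (h : AddMonoidAlgebra k (Fin n →₀ ℤ)) (y : Fin n →₀ ℤ),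
      (Ψ h).coeff y = π' (h.coeff y) := fun h y => by
    rw [show (Ψ h).coeff = Finsupp.mapRange π'hom π'hom.map_zero h.coeff from rfl, Finsupp.mapRange_apply]
    rfl
  have hΨ1 : Ψ (1 : AddMonoidAlgebra k (Fin n →₀ ℤ)) = 1 := by
    ext y
    rw [hΨapply, AddMonoidAlgebra.one_def, AddMonoidAlgebra.coeff_single]
    by_cases h : (0 : Fin n →₀ ℤ) = y
    · rw [← h, Finsupp.single_eq_same]
      exact hπfix 1 ⟨1, by rw [v.map_one], hres_one⟩
    · rw [Finsupp.single_eq_of_ne (Ne.symm h)]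
      exact hπ0
  have hΨsmul : ∀ (a : k) (h : AddMonoidAlgebra k (Fin n →₀ ℤ)),
      (∀ y, ∃ b : K, v b ≤ 1 ∧ res b = h.coeff y) → Ψ (a • h) = π' a • h := by
    intro a h hh
    ext y
    rw [hΨapply, show (a • h).coeff y = a * h.coeff y from rfl,
      show (π' a • h).coeff y = π' a * h.coeff y from rfl, mul_comm a (h.coeff y),
      hπsmul (h.coeff y) a (hh y), mul_comm]
  -- representatives in `I`
  have hrepr : ∀ m ∈ c.support, ∃ f, f ∈ I ∧ iniAt v s res γ f = m := by
    intro m hm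
    obtain ⟨f, hf, hfm⟩ := hcsupp hm
    exact ⟨f, hf, hfm⟩
  let F : AddMonoidAlgebra k (Fin n →₀ ℤ) → AddMonoidAlgebra K (Fin n →₀ ℤ) :=
    fun m => if h : ∃ f, f ∈ I ∧ iniAt v s res γ f = m then h.choose else 0
  have hFI : ∀ m ∈ c.support, F m ∈ I ∧ iniAt v s res γ (F m) = m := by
    intro m hm
    have hex := hrepr m hm
    rw [show F m = hex.choose from dif_pos hex]
    exact hex.choose_spec
  -- expanding the equation 1 = ∑ cₘ · m
  have e1 : (1 : AddMonoidAlgebra k (Fin n →₀ ℤ)) = ∑ m ∈ c.support, c m * m := by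
    rw [← hcsum]
    exact Finset.sum_congr rfl fun m _ => (smul_eq_mul _ _).symm
  have expand : ∀ (hh m : AddMonoidAlgebra k (Fin n →₀ ℤ)),
      hh * m = ∑ u ∈ hh.coeff.support, hh.coeff u • (AddMonoidAlgebra.single u (1 : k) * m) := by
    intro hh m
    conv_lhs => rw [← AddMonoidAlgebra.sum_coeff_single hh]
    rw [Finsupp.sum, Finset.sum_mul]
    refine Finset.sum_congr rfl fun u _ => ?_
    rw [← smul_mul_assoc]
    congr 1
    rw [AddMonoidAlgebra.smul_single', mul_one]
  have e2 : (1 : AddMonoidAlgebra k (Fin n →₀ ℤ))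
      = ∑ m ∈ c.support, ∑ u ∈ (c m).coeff.support,
          ((c m).coeff u) • (AddMonoidAlgebra.single u (1 : k) * m) :=
    e1.trans (Finset.sum_congr rfl fun m _ => expand (c m) m)
  -- coefficients of `single u 1 * m` lie in `k₀`
  have hcoeff : ∀ m ∈ c.support, ∀ u y : Fin n →₀ ℤ,
      ∃ b : K, v b ≤ 1 ∧ res b = (AddMonoidAlgebra.single u (1 : k) * m).coeff y := by
    intro m hm u y
    rw [← (hFI m hm).2, single_mul_apply'' (1 : k) (iniAt v s res γ (F m)) u y, one_mul]
    exact ini_coeff_mem v s hs res hres0 γ (F m) (y - u)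
  -- apply the projection Ψ to the equation
  have e3 : (1 : AddMonoidAlgebra k (Fin n →₀ ℤ))
      = ∑ m ∈ c.support, ∑ u ∈ (c m).coeff.support,
          π' ((c m).coeff u) • (AddMonoidAlgebra.single u (1 : k) * m) := by
    calc (1 : AddMonoidAlgebra k (Fin n →₀ ℤ)) = Ψ 1 := hΨ1.symm
      _ = Ψ (∑ m ∈ c.support, ∑ u ∈ (c m).coeff.support,
            ((c m).coeff u) • (AddMonoidAlgebra.single u (1 : k) * m)) := by rw [← e2]
      _ = ∑ m ∈ c.support, ∑ u ∈ (c m).coeff.support,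
            Ψ (((c m).coeff u) • (AddMonoidAlgebra.single u (1 : k) * m)) := by
          rw [map_sum]
          exact Finset.sum_congr rfl fun m _ => map_sum Ψ _ _
      _ = ∑ m ∈ c.support, ∑ u ∈ (c m).coeff.support,
            π' ((c m).coeff u) • (AddMonoidAlgebra.single u (1 : k) * m) :=
          Finset.sum_congr rfl fun m hm => Finset.sum_congr rfl fun u _ =>
            hΨsmul _ _ (hcoeff m hm u)
  -- every summand is a good element, hence so is 1
  have hgood : (1 : AddMonoidAlgebra k (Fin n →₀ ℤ)) ∈ GoodSet v s res γ I := by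
    rw [e3]
    refine good_sum v s hs res hres0 hres_add γ I _ _ fun m hm => ?_
    refine good_sum v s hs res hres0 hres_add γ I _ _ fun u _ => ?_
    obtain ⟨b, hb, hresb⟩ := hπmem ((c m).coeff u)
    rw [← hresb, ← (hFI m hm).2]
    exact good_term v s hs res hres0 hres_small hres_mul γ I (hFI m hm).1 u hb
  exact good_one_false v s hs res hres0 hres_small hres_mul hres_one γ I hroot hgood
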